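/- Let γ > 0, let C, S ∈ ℝ^{d×k} be matrices (of centered draws and centered scores), and suppose M ∈ ℝ^{d×d} is symmetric positive definite and satisfies the regularized optimality condition M (γI + C Cᵀ) M = γI + S Sᵀ. Then M acts as the identity on the orthogonal complement of the joint column space of C and S: for every v ∈ ℝᵈ with Cᵀv = 0 and Sᵀv = 0, M v = v. Moreover M maps the joint column space of C and S into itself, and on that subspace M satisfies the projected equation M₂ₖ (γI + C₂ₖC₂ₖᵀ) M₂ₖ = γI + S₂ₖS₂ₖᵀ, where C₂ₖ, S₂ₖ, M₂ₖ are the compressions of C, S, M to an orthonormal basis of that subspace. -/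

import Mathlib

open Matrix

private lemma dp_self_nonneg' {n : ℕ} (v : Fin n → ℝ) : 0 ≤ v ⬝ᵥ v :=
  Finset.sum_nonneg fun _ _ => mul_self_nonneg _

private lemma ext_of_mulVec_single {m n : ℕ} (A B : Matrix (Fin m) (Fin n) ℝ)
    (h : ∀ j, A *ᵥ Pi.single j 1 = B *ᵥ Pi.single j 1) : A = B := by
  ext i j
  have := congrFun (h j) i
  simpa using this

/-- Let `γ > 0` and suppose the SPD matrix `M` satisfies the
regularized optimality condition `M(γI + CCᵀ)M = γI + SSᵀ`. Then (a) `M` acts as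
the identity on the orthogonal complement of the joint column space of `C` and
`S`; (b) `M` maps the joint column space of `C` and `S` into itself; and (c) for
any matrix `Q` with orthonormal columns spanning that joint column space, the
compressions `M₂ₖ = QᵀMQ`, `C₂ₖ = QᵀC`, `S₂ₖ = QᵀS` satisfy the projected
equation `M₂ₖ(γI + C₂ₖC₂ₖᵀ)M₂ₖ = γI + S₂ₖS₂ₖᵀ`. -/
theorem fisher_hmc_lowrank_projection
    (d k : ℕ) (γ : ℝ) (hγ : 0 < γ)
    (C S : Matrix (Fin d) (Fin k) ℝ)
    (M : Matrix (Fin d) (Fin d) ℝ) (hM : M.PosDef)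
    (h : M * (γ • (1 : Matrix (Fin d) (Fin d) ℝ) + C * Cᵀ) * M
        = γ • (1 : Matrix (Fin d) (Fin d) ℝ) + S * Sᵀ) :
    (∀ v : Fin d → ℝ, Cᵀ.mulVec v = 0 → Sᵀ.mulVec v = 0 → M.mulVec v = v) ∧
    (∀ w₁ w₂ : Fin k → ℝ, ∃ u₁ u₂ : Fin k → ℝ,
      M.mulVec (C.mulVec w₁ + S.mulVec w₂) = C.mulVec u₁ + S.mulVec u₂) ∧
    (∀ (r : ℕ) (Q : Matrix (Fin d) (Fin r) ℝ),
      Qᵀ * Q = 1 →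
      (∀ v : Fin d → ℝ, (∃ u : Fin r → ℝ, Q.mulVec u = v) ↔
        ∃ w₁ w₂ : Fin k → ℝ, v = C.mulVec w₁ + S.mulVec w₂) →
      (Qᵀ * M * Q) * (γ • (1 : Matrix (Fin r) (Fin r) ℝ) + (Qᵀ * C) * (Qᵀ * C)ᵀ)
          * (Qᵀ * M * Q)
        = γ • (1 : Matrix (Fin r) (Fin r) ℝ) + (Qᵀ * S) * (Qᵀ * S)ᵀ) := by
  have hMT : Mᵀ = M := by
    have := hM.isHermitian.eq
    rwa [conjTranspose_eq_transpose_of_trivial] at this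
  have parta : ∀ v : Fin d → ℝ, Cᵀ.mulVec v = 0 → Sᵀ.mulVec v = 0 → M.mulVec v = v := by
      have hMT : Mᵀ = M := by
        have := hM.isHermitian.eq
        rwa [conjTranspose_eq_transpose_of_trivial] at this
      have hMdet : IsUnit M.det := (isUnit_iff_isUnit_det M).mp hM.isUnit
      have hMinv : M⁻¹ * M = 1 := nonsing_inv_mul M hMdet
      have hinvM : M * M⁻¹ = 1 := mul_nonsing_inv M hMdet
      have hMTinv : (M⁻¹)ᵀ = M⁻¹ := by rw [transpose_nonsing_inv, hMT]
      set A := γ • (1 : Matrix (Fin d) (Fin d) ℝ) + C * Cᵀ with hA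
      set B := γ • (1 : Matrix (Fin d) (Fin d) ℝ) + S * Sᵀ with hB
      have hAeq : A = M⁻¹ * B * M⁻¹ := by
        rw [← h]
        calc A = (M⁻¹ * M) * A * (M * M⁻¹) := by rw [hMinv, hinvM, one_mul, mul_one]
        _ = M⁻¹ * (M * A * M) * M⁻¹ := by noncomm_ring
      have hsym : ∀ (N : Matrix (Fin d) (Fin d) ℝ) (v w : Fin d → ℝ), Nᵀ = N →
          v ⬝ᵥ (N *ᵥ w) = (N *ᵥ v) ⬝ᵥ w := by
        intro N v w hN
        rw [dotProduct_mulVec, ← mulVec_transpose, hN]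
      intro v hCv hSv
      have hBv : B *ᵥ v = γ • v := by
        simp [hB, add_mulVec, smul_mulVec, ← mulVec_mulVec, hSv]
      have hAv : A *ᵥ v = γ • v := by
        simp [hA, add_mulVec, smul_mulVec, ← mulVec_mulVec, hCv]
      set u := M *ᵥ v with hu
      set z := M⁻¹ *ᵥ v with hz
      have hMz : M *ᵥ z = v := by rw [hz, mulVec_mulVec, hinvM, one_mulVec]
      -- quadratic form of A/B at a vector
      have hqA : ∀ x : Fin d → ℝ, x ⬝ᵥ (A *ᵥ x) = γ * (x ⬝ᵥ x) + (Cᵀ *ᵥ x) ⬝ᵥ (Cᵀ *ᵥ x) := by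
        intro x
        rw [hA, add_mulVec, dotProduct_add, smul_mulVec, one_mulVec, dotProduct_smul,
          ← mulVec_mulVec, dotProduct_mulVec, ← mulVec_transpose]
        rfl
      have hqB : ∀ x : Fin d → ℝ, x ⬝ᵥ (B *ᵥ x) = γ * (x ⬝ᵥ x) + (Sᵀ *ᵥ x) ⬝ᵥ (Sᵀ *ᵥ x) := by
        intro x
        rw [hB, add_mulVec, dotProduct_add, smul_mulVec, one_mulVec, dotProduct_smul,
          ← mulVec_mulVec, dotProduct_mulVec, ← mulVec_transpose]
        rfl
      -- fact 1 : γ‖u‖² + ‖Cᵀu‖² = γ‖v‖²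
      have f1 : γ * (u ⬝ᵥ u) + (Cᵀ *ᵥ u) ⬝ᵥ (Cᵀ *ᵥ u) = γ * (v ⬝ᵥ v) := by
        have e : v ⬝ᵥ ((M * A * M) *ᵥ v) = γ * (v ⬝ᵥ v) := by
          rw [h, hBv, dotProduct_smul]; rfl
        rw [← hqA u]
        rw [show (M * A * M) *ᵥ v = M *ᵥ (A *ᵥ u) by rw [hu, mulVec_mulVec, mulVec_mulVec],
          hsym M v _ hMT] at e
        exact e
      have f2 : γ * (z ⬝ᵥ z) + (Sᵀ *ᵥ z) ⬝ᵥ (Sᵀ *ᵥ z) = γ * (v ⬝ᵥ v) := by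
        have e : v ⬝ᵥ (A *ᵥ v) = γ * (v ⬝ᵥ v) := by rw [hAv, dotProduct_smul]; rfl
        rw [hAeq] at e
        rw [show (M⁻¹ * B * M⁻¹) *ᵥ v = M⁻¹ *ᵥ (B *ᵥ z) by rw [hz, mulVec_mulVec, mulVec_mulVec],
          hsym M⁻¹ v _ hMTinv] at e
        rw [← hqB z]
        exact e
      have f3 : u ⬝ᵥ z = v ⬝ᵥ v := by
        rw [hu, dotProduct_comm, hsym M z v hMT, hMz]
      have huu : u ⬝ᵥ u ≤ v ⬝ᵥ v := by
        nlinarith [dp_self_nonneg' (Cᵀ *ᵥ u)]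
      have hzz : z ⬝ᵥ z ≤ v ⬝ᵥ v := by
        nlinarith [dp_self_nonneg' (Sᵀ *ᵥ z)]
      have huz : u = z := by
        have hd : (u - z) ⬝ᵥ (u - z) = 0 := by
          have expand : (u - z) ⬝ᵥ (u - z) = u ⬝ᵥ u + z ⬝ᵥ z - 2 * (u ⬝ᵥ z) := by
            rw [sub_dotProduct, dotProduct_sub, dotProduct_sub, dotProduct_comm z u]; ring
          have := dp_self_nonneg' (u - z)
          linarith [expand ▸ this, huu, hzz, f3, dp_self_nonneg' (u - z)]
        exact sub_eq_zero.mp (dotProduct_self_eq_zero.mp hd)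
      -- now M *ᵥ (M *ᵥ v) = v
      have hM2 : M *ᵥ u = v := by rw [huz, hMz]
      set w := u - v with hw
      have hMw : M *ᵥ w = -w := by
        rw [hw, mulVec_sub, hM2, hu]; abel
      by_contra hne
      have hwne : w ≠ 0 := by
        intro h0
        have : u - v = 0 := by rw [← hw]; exact h0
        exact hne (sub_eq_zero.mp this)
      have hpos : 0 < w ⬝ᵥ (M *ᵥ w) := by
        have := hM.dotProduct_mulVec_pos hwne
        simpa using this
      rw [hMw] at hpos
      have : w ⬝ᵥ -w = -(w ⬝ᵥ w) := by simp
      linarith [dp_self_nonneg' w, this ▸ hpos]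
  have partb : ∀ w₁ w₂ : Fin k → ℝ, ∃ u₁ u₂ : Fin k → ℝ,
      M.mulVec (C.mulVec w₁ + S.mulVec w₂) = C.mulVec u₁ + S.mulVec u₂ := by
      have hsym : ∀ (v w : Fin d → ℝ), v ⬝ᵥ (M *ᵥ w) = (M *ᵥ v) ⬝ᵥ w := by
        intro v w
        rw [dotProduct_mulVec, ← mulVec_transpose, hMT]
      -- linear map into EuclideanSpace
      let T : ((Fin k → ℝ) × (Fin k → ℝ)) →ₗ[ℝ] EuclideanSpace ℝ (Fin d) :=
        { toFun := fun w => WithLp.toLp 2 (C *ᵥ w.1 + S *ᵥ w.2 : Fin d → ℝ)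
          map_add' := by
            intro a b
            show WithLp.toLp 2 (C *ᵥ (a.1 + b.1) + S *ᵥ (a.2 + b.2) : Fin d → ℝ) = _
            rw [mulVec_add, mulVec_add]
            show _ = WithLp.toLp 2 ((C *ᵥ a.1 + S *ᵥ a.2) + (C *ᵥ b.1 + S *ᵥ b.2))
            congr 1
            abel
          map_smul' := by
            intro c a
            show WithLp.toLp 2 (C *ᵥ (c • a.1) + S *ᵥ (c • a.2) : Fin d → ℝ) = _
            rw [mulVec_smul, mulVec_smul]
            show _ = WithLp.toLp 2 (c • (C *ᵥ a.1 + S *ᵥ a.2))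
            rw [smul_add] }
      set V : Submodule ℝ (EuclideanSpace ℝ (Fin d)) := LinearMap.range T with hV
      have hinner : ∀ (a b : EuclideanSpace ℝ (Fin d)), inner ℝ a b = (a : Fin d → ℝ) ⬝ᵥ b := by
        intro a b
        rw [PiLp.inner_apply]
        simp [dotProduct, mul_comm]
      intro w₁ w₂
      set x : EuclideanSpace ℝ (Fin d) := WithLp.toLp 2 (C *ᵥ w₁ + S *ᵥ w₂ : Fin d → ℝ) with hx
      have hxV : x ∈ V := ⟨(w₁, w₂), rfl⟩
      obtain ⟨p, hp, q, hq, hdecomp⟩ := V.exists_add_mem_mem_orthogonal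
        (WithLp.toLp 2 (M *ᵥ (x : Fin d → ℝ) : Fin d → ℝ) : EuclideanSpace ℝ (Fin d))
      -- q is orthogonal to all columns of C and S
      have hCq : Cᵀ *ᵥ (q : Fin d → ℝ) = 0 := by
        funext j
        have hcol : (WithLp.toLp 2 (C *ᵥ Pi.single j 1 + S *ᵥ (0 : Fin k → ℝ) : Fin d → ℝ) :
            EuclideanSpace ℝ (Fin d)) ∈ V := ⟨(Pi.single j 1, 0), rfl⟩
        have := (Submodule.mem_orthogonal V q).mp hq _ hcol
        rw [hinner] at this
        simp only [mulVec_zero, add_zero, mulVec_single, mul_one] at this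
        simpa [mulVec, dotProduct, transpose_apply] using this
      have hSq : Sᵀ *ᵥ (q : Fin d → ℝ) = 0 := by
        funext j
        have hcol : (WithLp.toLp 2 (C *ᵥ (0 : Fin k → ℝ) + S *ᵥ Pi.single j 1 : Fin d → ℝ) :
            EuclideanSpace ℝ (Fin d)) ∈ V := ⟨(0, Pi.single j 1), rfl⟩
        have := (Submodule.mem_orthogonal V q).mp hq _ hcol
        rw [hinner] at this
        simp only [mulVec_zero, zero_add, mulVec_single, mul_one] at this
        simpa [mulVec, dotProduct, transpose_apply] using this
      have hMq : M *ᵥ (q : Fin d → ℝ) = q := parta q hCq hSq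
      have hqq : (q : Fin d → ℝ) ⬝ᵥ q = 0 := by
        have h1 : (q : Fin d → ℝ) ⬝ᵥ (M *ᵥ (x : Fin d → ℝ)) = (q : Fin d → ℝ) ⬝ᵥ x := by
          rw [hsym, hMq]
        have h2 : (q : Fin d → ℝ) ⬝ᵥ (x : Fin d → ℝ) = 0 := by
          have := (Submodule.mem_orthogonal V q).mp hq x hxV
          rw [hinner, dotProduct_comm] at this
          exact this
        have h3 : (q : Fin d → ℝ) ⬝ᵥ (p : Fin d → ℝ) = 0 := by
          have := (Submodule.mem_orthogonal V q).mp hq p hp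
          rw [hinner, dotProduct_comm] at this
          exact this
        have h4 : (M *ᵥ (x : Fin d → ℝ) : Fin d → ℝ) = (p : Fin d → ℝ) + q := by
          exact_mod_cast congrArg (fun y : EuclideanSpace ℝ (Fin d) => (y : Fin d → ℝ)) hdecomp
        rw [h4, dotProduct_add, h3, zero_add] at h1
        rw [h1, h2]
      have hq0 : (q : Fin d → ℝ) = 0 := dotProduct_self_eq_zero.mp hqq
      have hMx : (WithLp.toLp 2 (M *ᵥ (x : Fin d → ℝ) : Fin d → ℝ) : EuclideanSpace ℝ (Fin d)) ∈ V := by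
        rw [hdecomp]
        have : (q : EuclideanSpace ℝ (Fin d)) = 0 := by ext i; simpa using congrFun hq0 i
        rw [this, add_zero]
        exact hp
      obtain ⟨⟨u₁, u₂⟩, hu⟩ := hMx
      exact ⟨u₁, u₂, by rw [hx] at hu; exact (congrArg WithLp.ofLp hu).symm⟩
  refine ⟨parta, partb, ?_⟩
  intro r Q hQ hspan
  -- fixation lemma
  have hfix : ∀ x : Fin d → ℝ, (∃ w₁ w₂ : Fin k → ℝ, x = C *ᵥ w₁ + S *ᵥ w₂) →
      Q *ᵥ (Qᵀ *ᵥ x) = x := by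
    intro x hx
    obtain ⟨u, hu⟩ := (hspan x).mpr hx
    rw [← hu, mulVec_mulVec, mulVec_mulVec, Matrix.mul_assoc, hQ, Matrix.mul_one]
  have hPC : Q * Qᵀ * C = C := by
    apply _root_.ext_of_mulVec_single
    intro j
    rw [← mulVec_mulVec, ← mulVec_mulVec]
    exact hfix _ ⟨Pi.single j 1, 0, by simp⟩
  have hPS : Q * Qᵀ * S = S := by
    apply _root_.ext_of_mulVec_single
    intro j
    rw [← mulVec_mulVec, ← mulVec_mulVec]
    exact hfix _ ⟨0, Pi.single j 1, by simp⟩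
  have hPMQ : Q * Qᵀ * (M * Q) = M * Q := by
    apply _root_.ext_of_mulVec_single
    intro j
    rw [← mulVec_mulVec, ← mulVec_mulVec (Pi.single j 1) M Q, ← mulVec_mulVec]
    obtain ⟨w₁, w₂, hw⟩ := (hspan (Q *ᵥ Pi.single j 1)).mp ⟨_, rfl⟩
    obtain ⟨u₁, u₂, hu⟩ := partb w₁ w₂
    rw [hw, hu]
    exact hfix _ ⟨u₁, u₂, rfl⟩
  have e1 : (Qᵀ * M * Q) * (Qᵀ * M * Q) = Qᵀ * (M * M) * Q := by
    calc (Qᵀ * M * Q) * (Qᵀ * M * Q) = Qᵀ * M * (Q * Qᵀ * (M * Q)) := by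
          simp only [Matrix.mul_assoc]
    _ = Qᵀ * M * (M * Q) := by rw [hPMQ]
    _ = Qᵀ * (M * M) * Q := by simp only [Matrix.mul_assoc]
  have e2 : (Qᵀ * M * Q) * ((Qᵀ * C) * (Cᵀ * Q)) * (Qᵀ * M * Q)
      = Qᵀ * (M * C * Cᵀ * M) * Q := by
    calc (Qᵀ * M * Q) * ((Qᵀ * C) * (Cᵀ * Q)) * (Qᵀ * M * Q)
        = Qᵀ * M * (Q * Qᵀ * C) * (Cᵀ * (Q * Qᵀ * (M * Q))) := by
          simp only [Matrix.mul_assoc]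
    _ = Qᵀ * M * C * (Cᵀ * (M * Q)) := by rw [hPMQ, hPC]
    _ = Qᵀ * (M * C * Cᵀ * M) * Q := by simp only [Matrix.mul_assoc]
  have hCQT : (Qᵀ * C)ᵀ = Cᵀ * Q := by rw [transpose_mul, transpose_transpose]
  have hSQT : (Qᵀ * S)ᵀ = Sᵀ * Q := by rw [transpose_mul, transpose_transpose]
  rw [hCQT, hSQT]
  have expand : M * (γ • (1 : Matrix (Fin d) (Fin d) ℝ) + C * Cᵀ) * M
      = γ • (M * M) + M * C * Cᵀ * M := by
    rw [Matrix.mul_add, Matrix.add_mul, Matrix.mul_smul, Matrix.mul_one, Matrix.smul_mul]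
    simp only [Matrix.mul_assoc]
  calc (Qᵀ * M * Q) * (γ • (1 : Matrix (Fin r) (Fin r) ℝ) + (Qᵀ * C) * (Cᵀ * Q))
          * (Qᵀ * M * Q)
      = γ • ((Qᵀ * M * Q) * (Qᵀ * M * Q))
        + (Qᵀ * M * Q) * ((Qᵀ * C) * (Cᵀ * Q)) * (Qᵀ * M * Q) := by
        rw [Matrix.mul_add, Matrix.add_mul, Matrix.mul_smul, Matrix.mul_one, Matrix.smul_mul]
  _ = γ • (Qᵀ * (M * M) * Q) + Qᵀ * (M * C * Cᵀ * M) * Q := by rw [e1, e2]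
  _ = Qᵀ * (γ • (M * M) + M * C * Cᵀ * M) * Q := by
        rw [Matrix.mul_add, Matrix.add_mul, Matrix.mul_smul, Matrix.smul_mul]
  _ = Qᵀ * (γ • (1 : Matrix (Fin d) (Fin d) ℝ) + S * Sᵀ) * Q := by rw [← expand, h]
  _ = γ • (1 : Matrix (Fin r) (Fin r) ℝ) + (Qᵀ * S) * (Sᵀ * Q) := by
        rw [Matrix.mul_add, Matrix.add_mul, Matrix.mul_smul, Matrix.mul_one, Matrix.smul_mul, hQ]
        simp only [Matrix.mul_assoc]
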